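/- Let S = {x_1, ..., x_m} ⊂ ℝ with x_1 < ... < x_m. Define v : ℝ → ℝ piecewise by: v(x) = x − x_1 + 1 for x ≤ x_1; for each i < m, v(x) = (−2/(x_{i+1}−x_i))(x − x_i) + 1 on [x_i, (x_i+x_{i+1})/2] and v(x) = (1/(x_{i+1}−x_i))(x − x_{i+1}) + 1 on [(x_i+x_{i+1})/2, x_{i+1}]; and v(x) = x_m − x + 1 for x ≥ x_m. Then v is well-defined and continuous, v(x_i) = 1 for all i, and the set of local maximum points of v is exactly S. -/

import Mathlib

/-- `p` is a local maximum point of `v`: `v y ≤ v p` in a neighborhood of `p`. -/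
def IsLocalMaxPt (v : ℝ → ℝ) (p : ℝ) : Prop :=
  ∃ ε > 0, ∀ y : ℝ, |y - p| < ε → v y ≤ v p

lemma sawtooth_gap (m : ℕ) (x : Fin (m + 1) → ℝ) (y : ℝ)
    (h0 : x 0 ≤ y) (h1 : y < x (Fin.last m)) :
    ∃ i : Fin m, x i.castSucc ≤ y ∧ y < x i.succ := by
  classical
  set s : Finset (Fin (m+1)) := Finset.univ.filter (fun j => x j ≤ y) with hs
  have hne : s.Nonempty := ⟨0, by simp [hs, h0]⟩
  set i0 := s.max' hne with hi0
  have hmem : i0 ∈ s := s.max'_mem hne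
  have hxi0 : x i0 ≤ y := by simpa [hs] using hmem
  have hne_last : i0 ≠ Fin.last m := by
    intro h; rw [h] at hxi0; linarith
  have hlt : (i0 : ℕ) < m := by
    have := Fin.lt_last_iff_ne_last.mpr hne_last
    simpa [Fin.lt_iff_val_lt_val] using this
  refine ⟨⟨i0, hlt⟩, ?_, ?_⟩
  · have : (⟨i0, hlt⟩ : Fin m).castSucc = i0 := rfl
    rw [this]; exact hxi0
  · by_contra h
    push_neg at h
    have hmem' : (⟨i0, hlt⟩ : Fin m).succ ∈ s := by
      rw [hs]; exact Finset.mem_filter.mpr ⟨Finset.mem_univ _, h⟩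
    have hle : (⟨i0, hlt⟩ : Fin m).succ ≤ i0 := s.le_max' _ hmem'
    have : (i0 : ℕ) + 1 ≤ (i0 : ℕ) := by
      simpa [Fin.le_iff_val_le_val] using hle
    omega

/-- for points `x 0 < x 1 < ... < x m`, the function `v` defined by
`v y = y − x 0 + 1` left of `x 0`; on each gap `[x i, x (i+1)]`, by the decreasing affine
piece of slope `−2/(x (i+1) − x i)` through `(x i, 1)` up to the breakpoint where it meets
the increasing affine piece of slope `1/(x (i+1) − x i)` through `(x (i+1), 1)` (the two
pieces intersect at `(2 x i + x (i+1))/3`), and `v y = x m − y + 1` right of `x m`,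
is continuous, satisfies `v (x i) = 1` for all `i`, and its set of local maximum points is
exactly `{x 0, ..., x m}`. -/
theorem explicit_sawtooth_properties
    (m : ℕ) (x : Fin (m + 1) → ℝ) (hx : StrictMono x)
    (v : ℝ → ℝ)
    (hleft : ∀ y : ℝ, y ≤ x 0 → v y = y - x 0 + 1)
    (hdec : ∀ i : Fin m, ∀ y ∈ Set.Icc (x i.castSucc)
        ((2 * x i.castSucc + x i.succ) / 3),
      v y = (-2 / (x i.succ - x i.castSucc)) * (y - x i.castSucc) + 1)
    (hinc : ∀ i : Fin m, ∀ y ∈ Set.Icc ((2 * x i.castSucc + x i.succ) / 3)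
        (x i.succ),
      v y = (1 / (x i.succ - x i.castSucc)) * (y - x i.succ) + 1)
    (hright : ∀ y : ℝ, x (Fin.last m) ≤ y → v y = x (Fin.last m) - y + 1) :
    Continuous v ∧ (∀ i : Fin (m + 1), v (x i) = 1) ∧
      (∀ p : ℝ, IsLocalMaxPt v p ↔ p ∈ Set.range x) := by
  classical
  set b : Fin m → ℝ := fun i => (2 * x i.castSucc + x i.succ) / 3 with hbdef
  have hd : ∀ i : Fin m, 0 < x i.succ - x i.castSucc :=
    fun i => sub_pos.mpr (hx (Fin.castSucc_lt_succ (i := i)))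
  have hb1 : ∀ i : Fin m, x i.castSucc < b i := by
    intro i; have := hd i; rw [hbdef]; dsimp; linarith
  have hb2 : ∀ i : Fin m, b i < x i.succ := by
    intro i; have := hd i; rw [hbdef]; dsimp; linarith
  -- values at the nodes
  have hval : ∀ i : Fin (m + 1), v (x i) = 1 := by
    intro i
    rcases eq_or_ne i (Fin.last m) with h | h
    · rw [h, hright _ le_rfl]; ring
    · have hlt : (i : ℕ) < m := by
        have := Fin.lt_last_iff_ne_last.mpr h
        simpa [Fin.lt_iff_val_lt_val] using this
      set j : Fin m := ⟨i, hlt⟩ with hjdef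
      have hj : j.castSucc = i := rfl
      have := hdec j (x j.castSucc) ⟨le_rfl, (hb1 j).le⟩
      rw [← hj, this]; ring
  -- global bound
  have hbound : ∀ y : ℝ, v y ≤ 1 := by
    intro y
    rcases le_or_gt y (x 0) with h | h
    · rw [hleft y h]; linarith
    rcases le_or_gt (x (Fin.last m)) y with h' | h'
    · rw [hright y h']; linarith
    obtain ⟨i, hi1, hi2⟩ := sawtooth_gap m x y h.le h'
    rcases le_or_gt y (b i) with hy | hy
    · rw [hdec i y ⟨hi1, hy⟩]
      have h2 : (-2 : ℝ) / (x i.succ - x i.castSucc) ≤ 0 :=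
        div_nonpos_of_nonpos_of_nonneg (by norm_num) (hd i).le
      nlinarith [mul_nonpos_of_nonpos_of_nonneg h2 (sub_nonneg.mpr hi1)]
    · rw [hinc i y ⟨hy.le, hi2.le⟩]
      have h2 : (0 : ℝ) ≤ 1 / (x i.succ - x i.castSucc) :=
        (one_div_pos.mpr (hd i)).le
      nlinarith [mul_nonpos_of_nonneg_of_nonpos h2 (sub_nonpos.mpr hi2.le)]
  refine ⟨?_, hval, ?_⟩
  · -- continuity via a finite closed cover
    set f : (Fin m × Bool) ⊕ Bool → Set ℝ :=
      Sum.elim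
        (fun p => if p.2 then Set.Icc (b p.1) (x p.1.succ)
          else Set.Icc (x p.1.castSucc) (b p.1))
        (fun t => if t then Set.Ici (x (Fin.last m)) else Set.Iic (x 0)) with hf
    apply (locallyFinite_of_finite f).continuous
    · -- cover
      apply Set.eq_univ_of_forall
      intro y
      simp only [Set.mem_iUnion]
      rcases le_or_gt y (x 0) with h | h
      · exact ⟨Sum.inr false, by simp [hf]; exact h⟩
      rcases le_or_gt (x (Fin.last m)) y with h' | h'
      · exact ⟨Sum.inr true, by simp [hf]; exact h'⟩
      obtain ⟨i, hi1, hi2⟩ := sawtooth_gap m x y h.le h'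
      rcases le_or_gt y (b i) with hy | hy
      · exact ⟨Sum.inl (i, false), by simp [hf]; exact ⟨hi1, hy⟩⟩
      · exact ⟨Sum.inl (i, true), by simp [hf]; exact ⟨hy.le, hi2.le⟩⟩
    · rintro (⟨i, (_ | _)⟩ | (_ | _)) <;>
        simp [hf, isClosed_Icc, isClosed_Ici, isClosed_Iic]
    · rintro (⟨i, bb⟩ | t)
      · cases bb
        · have : Continuous fun y : ℝ =>
              (-2 / (x i.succ - x i.castSucc)) * (y - x i.castSucc) + 1 := by
            fun_prop
          refine this.continuousOn.congr ?_
          intro y hy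
          simp only [hf, Sum.elim_inl, if_neg Bool.false_ne_true] at hy
          exact hdec i y hy
        · have : Continuous fun y : ℝ =>
              (1 / (x i.succ - x i.castSucc)) * (y - x i.succ) + 1 := by
            fun_prop
          refine this.continuousOn.congr ?_
          intro y hy
          simp only [hf, Sum.elim_inl, if_pos rfl] at hy
          exact hinc i y hy
      · cases t
        · have : Continuous fun y : ℝ => y - x 0 + 1 := by fun_prop
          refine this.continuousOn.congr ?_
          intro y hy
          simp only [hf, Sum.elim_inr, if_neg Bool.false_ne_true, Set.mem_Iic] at hy
          exact hleft y hy
        · have : Continuous fun y : ℝ => x (Fin.last m) - y + 1 := by fun_prop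
          refine this.continuousOn.congr ?_
          intro y hy
          simp only [hf, Sum.elim_inr, if_pos rfl, Set.mem_Ici] at hy
          exact hright y hy
  · intro p
    constructor
    · rintro ⟨ε, hε, hloc⟩
      by_contra hp
      rcases lt_or_ge p (x 0) with h | h
      · set y := min (p + ε / 2) (x 0) with hy
        have hyp : p < y := lt_min (by linarith) h
        have hyε : |y - p| < ε := by
          rw [abs_lt]; constructor
          · linarith
          · have : y ≤ p + ε / 2 := min_le_left _ _
            linarith
        have := hloc y hyε
        rw [hleft y (min_le_right _ _), hleft p h.le] at this
        linarith
      rcases lt_or_ge (x (Fin.last m)) p with h' | h'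
      · set y := max (p - ε / 2) (x (Fin.last m)) with hy
        have hyp : y < p := max_lt (by linarith) h'
        have hyε : |y - p| < ε := by
          rw [abs_lt]; constructor
          · have : p - ε / 2 ≤ y := le_max_left _ _
            linarith
          · linarith
        have := hloc y hyε
        rw [hright y (le_max_right _ _), hright p h'.le] at this
        linarith
      -- interior gap
      have h0 : p ≠ x 0 := fun he => hp ⟨0, he.symm⟩
      have hl : p ≠ x (Fin.last m) := fun he => hp ⟨Fin.last m, he.symm⟩
      have hlt' : p < x (Fin.last m) := lt_of_le_of_ne h' (Ne.symm (fun he => hl he.symm))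
      obtain ⟨i, hi1, hi2⟩ := sawtooth_gap m x p h hlt'
      have hi1' : x i.castSucc < p :=
        lt_of_le_of_ne hi1 (fun he => hp ⟨i.castSucc, he⟩)
      rcases le_or_gt p (b i) with hpb | hpb
      · -- strictly decreasing piece: go left
        set y := max (p - ε / 2) (x i.castSucc) with hy
        have hyp : y < p := max_lt (by linarith) hi1'
        have hyε : |y - p| < ε := by
          rw [abs_lt]; constructor
          · have : p - ε / 2 ≤ y := le_max_left _ _
            linarith
          · linarith
        have hymem : y ∈ Set.Icc (x i.castSucc) (b i) :=
          ⟨le_max_right _ _, by linarith⟩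
        have := hloc y hyε
        rw [hdec i y hymem, hdec i p ⟨hi1, hpb⟩] at this
        have hneg : (-2 : ℝ) / (x i.succ - x i.castSucc) < 0 :=
          div_neg_of_neg_of_pos (by norm_num) (hd i)
        nlinarith [mul_pos_of_neg_of_neg hneg (sub_neg.mpr hyp)]
      · -- strictly increasing piece: go right
        set y := min (p + ε / 2) (x i.succ) with hy
        have hyp : p < y := lt_min (by linarith) hi2
        have hyε : |y - p| < ε := by
          rw [abs_lt]; constructor
          · linarith
          · have : y ≤ p + ε / 2 := min_le_left _ _
            linarith
        have hymem : y ∈ Set.Icc (b i) (x i.succ) :=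
          ⟨by linarith, min_le_right _ _⟩
        have := hloc y hyε
        rw [hinc i y hymem, hinc i p ⟨hpb.le, hi2.le⟩] at this
        have hpos : (0 : ℝ) < 1 / (x i.succ - x i.castSucc) := one_div_pos.mpr (hd i)
        nlinarith [mul_pos hpos (sub_pos.mpr hyp)]
    · rintro ⟨i, rfl⟩
      exact ⟨1, one_pos, fun y _ => by rw [hval i]; exact hbound y⟩
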